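/- arXiv:1504.07030 — 7 statements merged into one kernel-verified Lean document; each statement's English description precedes it below -/
import Mathlib

section
/- Let X be a topological space and let X₁, …, Xₙ (n > 1) be closed subsets covering X such that Xᵢ ∩ Xⱼ = ∅ whenever |i − j| > 1. If x ∈ X₁ \ X₂ and y ∈ Xₙ \ Xₙ₋₁, then any walk x = z₀ ∼ z₁ ∼ … ∼ z_m = y in the inseparability graph (zᵢ ∼ zᵢ₊₁ meaning zᵢ and zᵢ₊₁ cannot be separated by disjoint open sets) has length m ≥ n. -/
/-- Inseparability relation: x and y cannot be separated by disjoint open sets. -/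
def Insep {X : Type*} [TopologicalSpace X] (x y : X) : Prop :=
  ∀ U V : Set X, IsOpen U → IsOpen V → x ∈ U → y ∈ V → (U ∩ V).Nonempty

open Classical in
/-- Two inseparable points must share a common member of the cover. -/
lemma insep_common_index {X : Type*} [TopologicalSpace X] (n : ℕ) (C : ℕ → Set X)
    (hclosed : ∀ i < n, IsClosed (C i))
    (hcover : ∀ x : X, ∃ i < n, x ∈ C i)
    {a b : X} (h : Insep a b) : ∃ j < n, a ∈ C j ∧ b ∈ C j := by
  by_contra hc
  push_neg at hc
  set U : Set X := (⋃ j ∈ Finset.range n, if a ∈ C j then (∅ : Set X) else C j)ᶜ with hUdef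
  set V : Set X := (⋃ j ∈ Finset.range n, if b ∈ C j then (∅ : Set X) else C j)ᶜ with hVdef
  have hclosedU : ∀ (c : X), IsClosed (⋃ j ∈ Finset.range n, if c ∈ C j then (∅ : Set X) else C j) := by
    intro c
    apply Set.Finite.isClosed_biUnion (Finset.range n).finite_toSet
    intro j hj
    split
    · exact isClosed_empty
    · exact hclosed j (Finset.mem_range.mp hj)
  have hmemU : ∀ (c : X), c ∈ (⋃ j ∈ Finset.range n, if c ∈ C j then (∅ : Set X) else C j)ᶜ := by
    intro c
    simp only [Set.mem_compl_iff, Set.mem_iUnion, not_exists]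
    intro j hj
    split
    · exact Set.notMem_empty c
    · next h => exact h
  obtain ⟨w, hwU, hwV⟩ := h U V (hclosedU a).isOpen_compl (hclosedU b).isOpen_compl
    (hmemU a) (hmemU b)
  obtain ⟨j, hjn, hwj⟩ := hcover w
  have haj : a ∈ C j := by
    by_contra haj
    apply hwU
    simp only [Set.mem_iUnion]
    exact ⟨j, Finset.mem_range.mpr hjn, by simp [haj, hwj]⟩
  have hbj : b ∈ C j := by
    by_contra hbj
    apply hwV
    simp only [Set.mem_iUnion]
    exact ⟨j, Finset.mem_range.mpr hjn, by simp [hbj, hwj]⟩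
  exact hc j hjn haj hbj

/-- Any walk in the inseparability graph from one end of a chain of length `n`
to the other has length at least `n`.  The chain is indexed `C 0, …, C (n-1)`. -/
theorem walk_length_ge_chain_length {X : Type*} [TopologicalSpace X]
    (n : ℕ) (hn : 1 < n) (C : ℕ → Set X)
    (hclosed : ∀ i < n, IsClosed (C i))
    (hcover : ∀ x : X, ∃ i < n, x ∈ C i)
    (hdisj : ∀ i < n, ∀ j < n, (i + 1 < j ∨ j + 1 < i) → Disjoint (C i) (C j))
    (x y : X) (hx : x ∈ C 0 \ C 1) (hy : y ∈ C (n - 1) \ C (n - 2))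
    (m : ℕ) (z : ℕ → X) (hz0 : z 0 = x) (hzm : z m = y)
    (hwalk : ∀ i < m, Insep (z i) (z (i + 1))) :
    n ≤ m := by
  -- indices of a single point are within distance 1 of each other
  have hgap : ∀ (w : X) (i j : ℕ), i < n → j < n → w ∈ C i → w ∈ C j → ¬ (i + 1 < j) := by
    intro w i j hi hj hwi hwj hlt
    exact Set.disjoint_left.mp (hdisj i hi j hj (Or.inl hlt)) hwi hwj
  -- main invariant
  have key : ∀ k, k ≤ m →
      (∀ j < n, z k ∈ C j → j ≤ k) ∧ (k < n → z k ∈ C k → k = 0 ∨ z k ∈ C (k - 1)) := by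
    intro k
    induction k with
    | zero =>
      intro _
      constructor
      · intro j hj hzj
        rw [hz0] at hzj
        by_contra hle
        push_neg at hle
        rcases Nat.lt_or_ge j 2 with h2 | h2
        · have hj1 : j = 1 := by omega
          rw [hj1] at hzj
          exact hx.2 hzj
        · exact hgap x 0 j (by omega) hj hx.1 hzj (by omega)
      · intro _ _; exact Or.inl rfl
    | succ k ih =>
      intro hk
      have hkm : k < m := by omega
      obtain ⟨hinv1, _⟩ := ih (le_of_lt hkm)
      obtain ⟨j', hj'n, hzkj', hzk1j'⟩ :=
        insep_common_index n C hclosed hcover (hwalk k hkm)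
      have hj'k : j' ≤ k := hinv1 j' hj'n hzkj'
      constructor
      · intro j hj hzj
        by_contra hle
        push_neg at hle
        exact hgap (z (k+1)) j' j hj'n hj hzk1j' hzj (by omega)
      · intro hk1n hzk1
        have : ¬ (j' + 1 < k + 1) := hgap (z (k+1)) j' (k+1) hj'n hk1n hzk1j' hzk1
        have hjk : j' = k := by omega
        right
        simpa [hjk] using hzk1j'
  obtain ⟨h1, h2⟩ := key m le_rfl
  have hnm : n - 1 ≤ m := h1 (n-1) (by omega) (hzm ▸ hy.1)
  by_contra hlt
  push_neg at hlt
  have hmn : m = n - 1 := by omega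
  rcases h2 (by omega) (by rw [hzm, hmn]; exact hy.1) with h0 | hC
  · omega
  · rw [hzm, hmn] at hC
    exact hy.2 hC
end

section
/- Let X be a topological space with a closed, relatively discrete subset Y such that every point of X \ Y is ∼-related only to itself (i.e., Y contains all points belonging to non-singleton ∼-components). Then for every closed subset C of X, the set C¹ = {x ∈ X : x ∈ C or x ∼ c for some c ∈ C} is closed in X. -/
/-- If `Y` is a closed relatively discrete subset containing all points belonging to
non-singleton ∼-components, then `C¹` is closed for every closed `C`. -/
theorem oneStep_closed {X : Type*} [TopologicalSpace X]
    (Y : Set X) (hYc : IsClosed Y) (hYd : DiscreteTopology Y)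
    (hsing : ∀ x ∉ Y, ∀ y : X, Insep x y → y = x)
    (C : Set X) (hC : IsClosed C) :
    IsClosed {x : X | x ∈ C ∨ ∃ c ∈ C, Insep x c} := by
  have hsub : ∀ S : Set X, S ⊆ Y → IsClosed S := by
    intro S hS
    have hEq : S = Subtype.val '' (Subtype.val ⁻¹' S : Set Y) := by
      rw [Set.image_preimage_eq_inter_range, Subtype.range_coe]
      exact (Set.inter_eq_left.2 hS).symm
    rw [hEq]
    exact hYc.isClosedEmbedding_subtypeVal.isClosedMap _ (isClosed_discrete _)
  set D := {x : X | x ∈ C ∨ ∃ c ∈ C, Insep x c} with hD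
  have hDeq : D = C ∪ (D ∩ Y) := by
    apply Set.Subset.antisymm
    · intro z hz
      rcases hz with hz | ⟨c, hc, hins⟩
      · exact Or.inl hz
      · by_cases hzY : z ∈ Y
        · exact Or.inr ⟨Or.inr ⟨c, hc, hins⟩, hzY⟩
        · have h := hsing z hzY c hins
          exact Or.inl (h ▸ hc)
    · rintro z (hz | ⟨hz, _⟩)
      · exact Or.inl hz
      · exact hz
  rw [hDeq]
  exact hC.union (hsub _ Set.inter_subset_right)
end

section
/- Let Y and Z be compact subsets of a topological space X such that every point of Y is separated from every point of Z and from every point ∼-related to a point of Z, and symmetrically (i.e., the graph distance d(Y,Z) in the inseparability graph is at least 2). Then there exist disjoint open sets U and V with Y ⊆ U and Z ⊆ V. -/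
lemma disjoint_nhds_of_not_insep {X : Type*} [TopologicalSpace X] {x y : X}
    (h : ¬ Insep x y) : Disjoint (nhds x) (nhds y) := by
  simp only [Insep, not_forall] at h
  obtain ⟨U, V, hU, hV, hxU, hyV, hne⟩ := h
  rw [Set.not_nonempty_iff_eq_empty] at hne
  exact Filter.disjoint_iff.2 ⟨U, hU.mem_nhds hxU, V, hV.mem_nhds hyV,
    Set.disjoint_iff_inter_eq_empty.2 hne⟩

/-- Compact sets at ∼-graph distance at least 2 can be separated by disjoint open sets. -/
theorem compact_dist_ge_two_separated {X : Type*} [TopologicalSpace X]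
    (Y Z : Set X) (hY : IsCompact Y) (hZ : IsCompact Z)
    (hd : ∀ y ∈ Y, ∀ z ∈ Z, ¬ Insep y z ∧ ¬ ∃ w : X, Insep y w ∧ Insep w z) :
    ∃ U V : Set X, IsOpen U ∧ IsOpen V ∧ Disjoint U V ∧ Y ⊆ U ∧ Z ⊆ V := by
  have hdis : Disjoint (nhdsSet Y) (nhdsSet Z) := by
    rw [hY.disjoint_nhdsSet_left]
    intro y hy
    rw [hZ.disjoint_nhdsSet_right]
    intro z hz
    exact disjoint_nhds_of_not_insep (hd y hy z hz).1
  obtain ⟨U, V, hU, hV, hYU, hZV, hUV⟩ := (separatedNhds_iff_disjoint.2 hdis)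
  exact ⟨U, V, hU, hV, hUV, hYU, hZV⟩
end

section
/- Let k ≥ 2. With the adjacency on signatures (m₁,…,m_k) ∈ ℤ^k, m₁ ≥ … ≥ m_{k−1} ≥ |m_k|, given by existence of a common interlacing tuple (q₁,…,q_{k−1}) (with mᵢ ≥ qᵢ ≥ |mᵢ₊₁| for both signatures), the graph distance between (0,0,…,0) and (1,1,…,1) is at least k. -/
/-- A signature of `SO(2k)`: integers `m 0 ≥ m 1 ≥ … ≥ m (k-2) ≥ |m (k-1)|`
(indices `0,…,k-1`; entries of `m` beyond `k-1` are irrelevant). -/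
def SigD (k : ℕ) (m : ℕ → ℤ) : Prop :=
  (∀ i, i + 3 ≤ k → m (i + 1) ≤ m i) ∧ |m (k - 1)| ≤ m (k - 2)

/-- `q` interlaces `m`: `m i ≥ q i ≥ |m (i+1)|` for `i = 0,…,k-2`. -/
def InterD (k : ℕ) (m q : ℕ → ℤ) : Prop :=
  ∀ i, i + 2 ≤ k → q i ≤ m i ∧ |m (i + 1)| ≤ q i

/-- Two `SO(2k)`-signatures are adjacent iff they admit a common interlacing tuple. -/
def AdjD (k : ℕ) (m m' : ℕ → ℤ) : Prop :=
  ∃ q : ℕ → ℤ, InterD k m q ∧ InterD k m' q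

/-- Any walk of `SO(2k)`-signatures from `(0,…,0)` to `(1,…,1)` has length at least `k`. -/
theorem so_even_dist_zero_one_ge (k : ℕ) (hk : 2 ≤ k)
    (L : ℕ) (z : ℕ → ℕ → ℤ)
    (h0 : z 0 = fun _ => (0 : ℤ)) (hL : z L = fun _ => (1 : ℤ))
    (hsig : ∀ i ≤ L, SigD k (z i))
    (hadj : ∀ i < L, AdjD k (z i) (z (i + 1))) :
    k ≤ L := by
  have key : ∀ i ≤ L, ∀ j, i ≤ j → j < k → z i j = 0 := by
    intro i
    induction i with
    | zero => intro _ j _ _; simp [h0]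
    | succ i ih =>
      intro hiL j hij hjk
      obtain ⟨q, hq1, hq2⟩ := hadj i (by omega)
      have hj1 : 1 ≤ j := by omega
      have h2 : (j - 1) + 2 ≤ k := by omega
      have hzi : z i (j - 1) = 0 := ih (by omega) (j - 1) (by omega) (by omega)
      have hq0 : q (j - 1) = 0 := by
        have h1 := hq1 (j - 1) h2
        have := abs_nonneg (z i ((j - 1) + 1))
        omega
      have h3 := (hq2 (j - 1) h2).2
      have h4 : (j - 1) + 1 = j := by omega
      rw [h4, hq0] at h3
      exact abs_eq_zero.mp (le_antisymm h3 (abs_nonneg _))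
  by_contra h
  have hLk : L ≤ k - 1 := by omega
  have := key L le_rfl (k - 1) (by omega) (by omega)
  rw [hL] at this
  simp at this
end

section
/- Let k ≥ 2. Define a graph on the set S = {(m₁,…,m_k) ∈ ℤ^k : m₁ ≥ m₂ ≥ … ≥ m_k ≥ 0}, where m and m' are adjacent iff there exists (p₁,…,p_k) ∈ ℤ^k with m₁ ≥ p₁ ≥ m₂ ≥ p₂ ≥ … ≥ m_k ≥ p_k ≥ −m_k and m'₁ ≥ p₁ ≥ m'₂ ≥ … ≥ m'_k ≥ p_k ≥ −m'_k. Then the graph distance between any two elements of S is at most k, and the distance between (0,…,0) and (1,…,1) is exactly k. -/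
/-- A signature of `SO(2k+1)`: integers `m 0 ≥ m 1 ≥ … ≥ m (k-1) ≥ 0`. -/
def SigB (k : ℕ) (m : ℕ → ℤ) : Prop :=
  (∀ i, i + 2 ≤ k → m (i + 1) ≤ m i) ∧ 0 ≤ m (k - 1)

/-- `p` interlaces `m`: `m i ≥ p i ≥ m (i+1)` for `i < k-1` and `m (k-1) ≥ p (k-1) ≥ -m (k-1)`. -/
def InterB (k : ℕ) (m p : ℕ → ℤ) : Prop :=
  (∀ i, i + 2 ≤ k → p i ≤ m i ∧ m (i + 1) ≤ p i) ∧
    p (k - 1) ≤ m (k - 1) ∧ -(m (k - 1)) ≤ p (k - 1)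

/-- Two `SO(2k+1)`-signatures are adjacent iff they admit a common interlacing tuple. -/
def AdjB (k : ℕ) (m m' : ℕ → ℤ) : Prop :=
  ∃ p : ℕ → ℤ, InterB k m p ∧ InterB k m' p

/-- Zero-extension of a signature. -/
def McB (m : ℕ → ℤ) (k i : ℕ) : ℤ := if i < k then m i else 0

lemma mcB_anti {k : ℕ} {m : ℕ → ℤ} (hm : SigB k m) : Antitone (McB m k) := by
  apply antitone_nat_of_succ_le
  intro j
  unfold McB
  rcases lt_trichotomy (j + 1) k with h | h | h
  · rw [if_pos h, if_pos (by omega)]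
    exact hm.1 j (by omega)
  · rw [if_neg (by omega), if_pos (by omega)]
    have : j = k - 1 := by omega
    subst this; exact hm.2
  · rw [if_neg (by omega), if_neg (by omega)]

lemma mcB_nonneg {k : ℕ} {m : ℕ → ℤ} (hm : SigB k m) (i : ℕ) : 0 ≤ McB m k i := by
  rcases lt_or_ge i k with h | h
  · have h2 := mcB_anti hm (Nat.le_of_lt h)
    simpa [McB] using h2
  · simp [McB, Nat.not_lt.mpr h]

lemma sigB_nonneg {k : ℕ} {m : ℕ → ℤ} (hm : SigB k m) {j : ℕ} (hj : j < k) : 0 ≤ m j := by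
  have := mcB_nonneg hm j
  rwa [McB, if_pos hj] at this

/-- The interpolating path. -/
def wB (m m' : ℕ → ℤ) (k t : ℕ) : ℕ → ℤ :=
  fun j => max (McB m k (j + t)) (McB m' k (j + (k - t)))

lemma wB_sig {k : ℕ} {m m' : ℕ → ℤ} (hm : SigB k m) (hm' : SigB k m') (t : ℕ) :
    SigB k (wB m m' k t) := by
  constructor
  · intro i _
    exact max_le_max (mcB_anti hm (by omega)) (mcB_anti hm' (by omega))
  · exact le_trans (mcB_nonneg hm _) (le_max_left _ _)

lemma wB_zero {k : ℕ} {m m' : ℕ → ℤ} (hm : SigB k m) {j : ℕ} (hj : j < k) :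
    wB m m' k 0 j = m j := by
  unfold wB McB
  rw [if_pos (by omega), if_neg (by omega)]
  simp only [Nat.add_zero]
  exact max_eq_left (sigB_nonneg hm hj)

lemma wB_last {k : ℕ} {m m' : ℕ → ℤ} (hm' : SigB k m') {j : ℕ} (hj : j < k) :
    wB m m' k k j = m' j := by
  unfold wB McB
  rw [if_neg (by omega), if_pos (by omega)]
  simp only [Nat.sub_self, Nat.add_zero]
  exact max_eq_right (sigB_nonneg hm' hj)

lemma wB_top {k : ℕ} (m m' : ℕ → ℤ) {t : ℕ} (_ : t ≤ k) : wB m m' k t k = 0 := by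
  unfold wB McB
  rw [if_neg (by omega), if_neg (by omega)]
  simp

lemma wB_step1 {k : ℕ} {m m' : ℕ → ℤ} (hm : SigB k m) (hm' : SigB k m') {t : ℕ}
    (ht : t + 1 ≤ k) (j : ℕ) : wB m m' k (t + 1) (j + 1) ≤ wB m m' k t j := by
  apply max_le
  · exact le_trans (mcB_anti hm (by omega)) (le_max_left _ _)
  · exact le_trans (mcB_anti hm' (by omega)) (le_max_right _ _)

lemma wB_step2 {k : ℕ} {m m' : ℕ → ℤ} (hm : SigB k m) (hm' : SigB k m') {t : ℕ}
    (ht : t + 1 ≤ k) (j : ℕ) : wB m m' k t (j + 1) ≤ wB m m' k (t + 1) j := by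
  apply max_le
  · exact le_trans (mcB_anti hm (by omega)) (le_max_left _ _)
  · exact le_trans (mcB_anti hm' (by omega)) (le_max_right _ _)

lemma wB_nonneg {k : ℕ} {m m' : ℕ → ℤ} (hm : SigB k m) (t j : ℕ) :
    0 ≤ wB m m' k t j :=
  le_trans (mcB_nonneg hm _) (le_max_left _ _)

lemma wB_adj {k : ℕ} {m m' : ℕ → ℤ} (hk : 2 ≤ k) (hm : SigB k m) (hm' : SigB k m')
    {t : ℕ} (ht : t + 1 ≤ k) : AdjB k (wB m m' k t) (wB m m' k (t + 1)) := by
  refine ⟨fun i => max (wB m m' k t (i + 1)) (wB m m' k (t + 1) (i + 1)), ?_, ?_⟩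
  · refine ⟨fun i hi => ⟨max_le ((wB_sig hm hm' t).1 i hi) (wB_step1 hm hm' ht i),
      le_max_left _ _⟩, ?_, ?_⟩
    · have hk1 : k - 1 + 1 = k := by omega
      have e1 : wB m m' k t (k - 1 + 1) = 0 := by rw [hk1]; exact wB_top m m' (by omega)
      have e2 : wB m m' k (t + 1) (k - 1 + 1) = 0 := by rw [hk1]; exact wB_top m m' ht
      refine max_le ?_ ?_
      · rw [e1]; exact wB_nonneg hm t (k - 1)
      · rw [e2]; exact wB_nonneg hm t (k - 1)
    · refine le_trans (neg_nonpos.mpr (wB_nonneg hm t (k - 1))) ?_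
      exact le_trans (wB_nonneg hm t (k - 1 + 1)) (le_max_left _ _)
  · refine ⟨fun i hi => ⟨max_le (wB_step2 hm hm' ht i) ((wB_sig hm hm' (t + 1)).1 i hi),
      le_max_right _ _⟩, ?_, ?_⟩
    · have hk1 : k - 1 + 1 = k := by omega
      have e1 : wB m m' k t (k - 1 + 1) = 0 := by rw [hk1]; exact wB_top m m' (by omega)
      have e2 : wB m m' k (t + 1) (k - 1 + 1) = 0 := by rw [hk1]; exact wB_top m m' ht
      refine max_le ?_ ?_
      · rw [e1]; exact wB_nonneg hm (t + 1) (k - 1)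
      · rw [e2]; exact wB_nonneg hm (t + 1) (k - 1)
    · refine le_trans (neg_nonpos.mpr (wB_nonneg hm (t + 1) (k - 1))) ?_
      exact le_trans (wB_nonneg hm t (k - 1 + 1)) (le_max_left _ _)

lemma sigB_congr {k : ℕ} (hk : 2 ≤ k) {x y : ℕ → ℤ} (h : ∀ j < k, x j = y j)
    (hy : SigB k y) : SigB k x := by
  constructor
  · intro i hi
    rw [h i (by omega), h (i + 1) (by omega)]
    exact hy.1 i hi
  · rw [h (k - 1) (by omega)]; exact hy.2

lemma interB_congr {k : ℕ} (hk : 2 ≤ k) {x y p : ℕ → ℤ} (h : ∀ j < k, x j = y j)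
    (hy : InterB k y p) : InterB k x p := by
  refine ⟨fun i hi => ?_, ?_, ?_⟩
  · rw [h i (by omega), h (i + 1) (by omega)]
    exact hy.1 i hi
  · rw [h (k - 1) (by omega)]; exact hy.2.1
  · rw [h (k - 1) (by omega)]; exact hy.2.2

/-- In the interlacing graph on `SO(2k+1)`-signatures, any two signatures are at
distance at most `k`, and the distance from `(0,…,0)` to `(1,…,1)` is exactly `k`. -/
theorem so_odd_diam (k : ℕ) (hk : 2 ≤ k) :
    (∀ m m' : ℕ → ℤ, SigB k m → SigB k m' →
      ∃ L ≤ k, ∃ z : ℕ → ℕ → ℤ, z 0 = m ∧ z L = m' ∧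
        (∀ i ≤ L, SigB k (z i)) ∧ (∀ i < L, AdjB k (z i) (z (i + 1)))) ∧
    (∀ (L : ℕ) (z : ℕ → ℕ → ℤ), z 0 = (fun _ => (0 : ℤ)) → z L = (fun _ => (1 : ℤ)) →
      (∀ i ≤ L, SigB k (z i)) → (∀ i < L, AdjB k (z i) (z (i + 1))) → k ≤ L) := by
  constructor
  · intro m m' hm hm'
    refine ⟨k, le_rfl, fun t j => if t = 0 then m j else if t = k then m' j else wB m m' k t j,
      ?_, ?_, ?_, ?_⟩
    · funext j; simp
    · funext j; simp [show k ≠ 0 by omega]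
    all_goals {
      have hagree : ∀ t, ∀ j < k,
          (if t = 0 then m j else if t = k then m' j else wB m m' k t j) = wB m m' k t j := by
        intro t j hj
        rcases eq_or_ne t 0 with rfl | h0
        · simp [wB_zero hm hj]
        rcases eq_or_ne t k with rfl | hK
        · simp [h0, wB_last hm' hj]
        · simp [h0, hK]
      first
      | · intro i _
          exact sigB_congr hk (fun j hj => hagree i j hj) (wB_sig hm hm' i)
      | · intro i hik
          obtain ⟨p, h1, h2⟩ := wB_adj hk hm hm' (show i + 1 ≤ k from hik)
          exact ⟨p, interB_congr hk (fun j hj => hagree i j hj) h1,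
            interB_congr hk (fun j hj => hagree (i + 1) j hj) h2⟩
    }
  · intro L z hz0 hzL hsig hadj
    have key : ∀ t, t ≤ L → ∀ j, t ≤ j → j < k → z t j = 0 := by
      intro t
      induction t with
      | zero => intro _ j _ _; rw [hz0]
      | succ t ih =>
        intro ht1 j htj hjk
        have hle : z (t + 1) j ≤ 0 := by
          obtain ⟨p, h1, h2⟩ := hadj t (by omega)
          have hi : j - 1 + 2 ≤ k := by omega
          have hj1 : j - 1 + 1 = j := by omega
          have e1 : z (t + 1) j ≤ p (j - 1) := by
            have := (h2.1 (j - 1) hi).2; rwa [hj1] at this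
          have e2 : p (j - 1) ≤ z t (j - 1) := (h1.1 (j - 1) hi).1
          have e3 : z t (j - 1) = 0 := ih (by omega) (j - 1) (by omega) (by omega)
          omega
        have hge : 0 ≤ z (t + 1) j := sigB_nonneg (hsig (t + 1) ht1) hjk
        omega
    by_contra h
    have hLk : L < k := by omega
    have := key L le_rfl (k - 1) (by omega) (by omega)
    rw [hzL] at this
    simp at this
end

section
/- For k = 2r even, in the interlacing graph on SO(2k)-signatures, every signature (m₁,…,m_k) is connected by a walk of length at most r to the signature (s₁,…,s_r, 0,…,0) for suitable s₁ ≥ … ≥ s_r ≥ 0; explicitly, for any target values sⱼ ≥ mⱼ, the signature (s₁,…,s_i, m_i, m_{i+1},…,m_{k−1−i}, 0,…,0) is adjacent to (s₁,…,s_{i+1}, m_{i+1},…,m_{k−2−i}, 0,…,0) for each 0 ≤ i ≤ r−1. -/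
/-- For `k = 2r`, every `SO(2k)`-signature `m` is joined by a walk of length `r`
to `(s 0, …, s (r-1), 0, …, 0)`, for any decreasing nonnegative targets `s j ≥ m j`;
the `i`-th vertex of the walk is `(s 0, …, s (i-1), m i, …, m (k-1-i), 0, …, 0)`. -/
theorem so_even_walk_to_targets (r : ℕ) (hr : 1 ≤ r) (k : ℕ) (hk : k = 2 * r)
    (m s : ℕ → ℤ) (hm : SigD k m)
    (hs : ∀ j, j + 1 < r → s (j + 1) ≤ s j) (hs0 : 0 ≤ s (r - 1))
    (hsm : ∀ j, j < r → m j ≤ s j) :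
    ∃ z : ℕ → ℕ → ℤ,
      (∀ i, i ≤ r → ∀ t, z i t = if t < i then s t else if t + i ≤ k - 1 then m t else 0) ∧
      (∀ t, t < k → z 0 t = m t) ∧
      (∀ t, t < r → z r t = s t) ∧ (∀ t, r ≤ t → t < k → z r t = 0) ∧
      (∀ i, i < r → AdjD k (z i) (z (i + 1))) := by
  obtain ⟨hm1, hm2⟩ := hm
  have hk2 : 2 ≤ k := by omega
  -- monotonicity of m on [0, k-2]
  have mmono : ∀ d a, a + d ≤ k - 2 → m (a + d) ≤ m a := by
    intro d
    induction d with
    | zero => intro a _; simp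
    | succ n ih =>
      intro a h
      have h1 : m (a + n + 1) ≤ m (a + n) := hm1 (a + n) (by omega)
      have h2 : m (a + n) ≤ m a := ih a (by omega)
      have h3 : a + (n + 1) = a + n + 1 := by omega
      rw [h3]; linarith
  have mle : ∀ a b : ℕ, a ≤ b → b ≤ k - 2 → m b ≤ m a := by
    intro a b hab hb
    have h3 : b = a + (b - a) := by omega
    rw [h3]; exact mmono (b - a) a (by omega)
  have hnn : ∀ t, t ≤ k - 2 → 0 ≤ m t := by
    intro t ht
    have h1 : m (k - 2) ≤ m t := mle t (k - 2) ht (le_refl _)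
    have h2 : 0 ≤ m (k - 2) := le_trans (abs_nonneg _) hm2
    linarith
  have habs : ∀ t, t + 2 ≤ k → |m (t + 1)| ≤ m t := by
    intro t ht
    by_cases hc : t + 3 ≤ k
    · rw [abs_of_nonneg (hnn (t + 1) (by omega))]
      exact hm1 t hc
    · have h1 : t + 1 = k - 1 := by omega
      have h2 : t = k - 2 := by omega
      rw [h1, h2]; exact hm2
  -- monotonicity and nonnegativity of s on [0, r-1]
  have sle : ∀ a b : ℕ, a ≤ b → b ≤ r - 1 → s b ≤ s a := by
    intro a b hab hb
    have key : ∀ d a, a + d ≤ r - 1 → s (a + d) ≤ s a := by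
      intro d
      induction d with
      | zero => intro a _; simp
      | succ n ih =>
        intro a h
        have h1 : s (a + n + 1) ≤ s (a + n) := hs (a + n) (by omega)
        have h2 : s (a + n) ≤ s a := ih a (by omega)
        have h3 : a + (n + 1) = a + n + 1 := by omega
        rw [h3]; linarith
    have h3 : b = a + (b - a) := by omega
    rw [h3]; exact key (b - a) a (by omega)
  have snn : ∀ t, t < r → 0 ≤ s t := by
    intro t ht
    have := sle t (r - 1) (by omega) (le_refl _)
    linarith
  set Z : ℕ → ℕ → ℤ := fun i t => if t < i then s t else if t + i ≤ k - 1 then m t else 0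
    with hZ
  have key : ∀ j j' t, j ≤ r → j' ≤ r → j' ≤ j + 1 → j ≤ j' + 1 → t + 2 ≤ k →
      |Z j' (t + 1)| ≤ Z j t := by
    intro j j' t hj hj' h1 h2 ht
    simp only [hZ]
    split_ifs with c1 c3 c4 c2 c3' c4' c3'' c4''
    · -- s(t+1) vs s t
      rw [abs_of_nonneg (snn (t + 1) (by omega))]
      exact hs t (by omega)
    · exfalso; omega
    · exfalso; omega
    · -- m(t+1) vs s t
      have h3 : |m (t + 1)| ≤ m t := habs t ht
      have h4 : m t ≤ s t := hsm t (by omega)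
      linarith
    · -- m(t+1) vs m t
      exact habs t ht
    · exfalso; omega
    · -- 0 vs s t
      simpa using snn t (by omega)
    · -- 0 vs m t
      simpa using hnn t (by omega)
    · simp
  refine ⟨Z, fun i _ t => rfl, ?_, ?_, ?_, ?_⟩
  · intro t ht
    simp only [hZ]
    rw [if_neg (by omega), if_pos (by omega)]
  · intro t ht
    simp only [hZ]
    rw [if_pos ht]
  · intro t h1 h2
    simp only [hZ]
    rw [if_neg (by omega), if_neg (by omega)]
  · intro i hi
    refine ⟨fun t => max |Z i (t + 1)| |Z (i + 1) (t + 1)|, fun t ht => ⟨?_, ?_⟩,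
      fun t ht => ⟨?_, ?_⟩⟩
    · exact max_le (key i i t (by omega) (by omega) (by omega) (by omega) ht)
        (key i (i + 1) t (by omega) (by omega) (by omega) (by omega) ht)
    · exact le_max_left _ _
    · exact max_le (key (i + 1) i t (by omega) (by omega) (by omega) (by omega) ht)
        (key (i + 1) (i + 1) t (by omega) (by omega) (by omega) (by omega) ht)
    · exact le_max_right _ _
end

section
/- Let X be a topological space whose quotient W by the equivalence relation 'finite ∼-distance' (x ⋄ y iff d(x,y) < ∞ in the inseparability graph) is such that the quotient map q : X → W is closed. If for every x ∈ X, every point in the closure of {x} is ∼-related to x, then W with the quotient topology is a T₁ space. -/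
/-- `IsWalk R z L`: `z` is a walk of length `L` in the graph with adjacency `R`. -/
def IsWalk {X : Type*} (R : X → X → Prop) (z : ℕ → X) (L : ℕ) : Prop :=
  ∀ i < L, R (z i) (z (i + 1))

/-- If `q` is a closed quotient map whose fibres are the classes of the
finite-∼-distance relation, and every point of `cl{x}` is ∼-related to `x`,
then the quotient is `T₁`. -/
theorem finite_dist_quotient_t1 {X W : Type*} [TopologicalSpace X] [TopologicalSpace W]
    (q : X → W) (hquot : Topology.IsQuotientMap q) (hclosed : IsClosedMap q)
    (hfib : ∀ x y : X, q x = q y ↔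
      ∃ L, ∃ z : ℕ → X, z 0 = x ∧ z L = y ∧ IsWalk Insep z L)
    (hcl : ∀ x y : X, y ∈ closure {x} → Insep y x) :
    T1Space W := by
  constructor
  intro w
  obtain ⟨x, rfl⟩ := hquot.surjective w
  have key : q '' closure {x} = {q x} := by
    apply Set.eq_singleton_iff_unique_mem.mpr
    constructor
    · exact ⟨x, subset_closure rfl, rfl⟩
    · rintro _ ⟨y, hy, rfl⟩
      have : Insep y x := hcl x y hy
      exact ((hfib y x).mpr ⟨1, fun i => if i = 0 then y else x, rfl, rfl,
        fun i hi => by interval_cases i; simpa using this⟩)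
  have := hclosed (closure {x}) isClosed_closure
  rwa [key] at this
end
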